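/- Let ψ : [0,∞) → [0,∞) satisfy ψ(0) = 0 and ψ(t) > 0 for t > 0. Suppose both ψ and t ↦ t/ψ(t) are K-increasing for some K ≥ 1 (i.e. ψ(s) ≤ Kψ(t) and s/ψ(s) ≤ K t/ψ(t) whenever 0 ≤ s ≤ t). Then there exist a continuous, increasing, concave function Ψ on [0,∞) and absolute positive constants c₁, c₂ (independent of ψ and K) such that c₁ψ(t) ≤ Ψ(t) ≤ c₂K²ψ(t) for all t > 0. -/

import Mathlib

open Real

set_option maxHeartbeats 1000000 in
/-- Every function `ψ` with `ψ` and `t ↦ t/ψ(t)` both `K`-increasing is equivalent,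
with constants `c₁, c₂K²` (where `c₁, c₂` are absolute), to a continuous increasing
concave function `Ψ` on `[0,∞)`. -/
theorem stmt_16 :
    ∃ c₁ c₂ : ℝ, 0 < c₁ ∧ 0 < c₂ ∧
      ∀ (ψ : ℝ → ℝ) (K : ℝ), 1 ≤ K →
        (∀ t ≥ (0:ℝ), 0 ≤ ψ t) → ψ 0 = 0 → (∀ t > (0:ℝ), 0 < ψ t) →
        (∀ s t : ℝ, 0 ≤ s → s ≤ t → ψ s ≤ K * ψ t) →
        (∀ s t : ℝ, 0 ≤ s → s ≤ t → s / ψ s ≤ K * (t / ψ t)) →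
        ∃ Ψ : ℝ → ℝ,
          ContinuousOn Ψ (Set.Ici 0) ∧ MonotoneOn Ψ (Set.Ici 0) ∧
          ConcaveOn ℝ (Set.Ici 0) Ψ ∧
          ∀ t > (0:ℝ), c₁ * ψ t ≤ Ψ t ∧ Ψ t ≤ c₂ * K ^ 2 * ψ t := by
  refine ⟨1, 2, one_pos, two_pos, ?_⟩
  intro ψ K hK hψnn hψ0 hψpos hinc hinc'
  have hK0 : (0:ℝ) < K := lt_of_lt_of_le one_pos hK
  set S : ℝ → Set ℝ := fun t => (fun s => ψ s * (1 + t / s)) '' Set.Ioi (0:ℝ) with hS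
  have hne : ∀ t : ℝ, (S t).Nonempty := fun t => ⟨ψ 1 * (1 + t / 1), 1, Set.mem_Ioi.mpr one_pos, rfl⟩
  have hmem : ∀ t s : ℝ, 0 < s → ψ s * (1 + t / s) ∈ S t := fun t s hs => ⟨s, hs, rfl⟩
  have hnn : ∀ t : ℝ, 0 ≤ t → ∀ e ∈ S t, 0 ≤ e := by
    rintro t ht e ⟨s, hs, rfl⟩
    have h1 := hψnn s (le_of_lt hs)
    have h2 : 0 ≤ t / s := div_nonneg ht (le_of_lt hs)
    nlinarith
  have hbdd : ∀ t : ℝ, 0 ≤ t → BddBelow (S t) := fun t ht => ⟨0, fun e he => hnn t ht e he⟩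
  set Ψ : ℝ → ℝ := fun t => K * sInf (S t) with hΨdef
  have hInfnn : ∀ t : ℝ, 0 ≤ t → 0 ≤ sInf (S t) := fun t ht => le_csInf (hne t) (hnn t ht)
  have hΨnn : ∀ t : ℝ, 0 ≤ t → 0 ≤ Ψ t := fun t ht => mul_nonneg (le_of_lt hK0) (hInfnn t ht)
  -- monotonicity
  have hmonoInf : ∀ a b : ℝ, 0 ≤ a → a ≤ b → sInf (S a) ≤ sInf (S b) := by
    intro a b ha hab
    refine le_csInf (hne b) ?_
    rintro e ⟨s, hs, rfl⟩
    refine le_trans (csInf_le (hbdd a ha) (hmem a s hs)) ?_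
    have hs0 : (0:ℝ) < s := hs
    have h1 : a / s ≤ b / s := by gcongr
    have h2 := hψnn s (le_of_lt hs)
    nlinarith
  have hmono : MonotoneOn Ψ (Set.Ici 0) := fun a ha b _ hab =>
    mul_le_mul_of_nonneg_left (hmonoInf a b ha hab) (le_of_lt hK0)
  -- key multiplicative bound : a * Ψ b ≤ b * Ψ a for 0 < a ≤ b
  have hBInf : ∀ a b : ℝ, 0 < a → a ≤ b → a * Ψ b ≤ b * Ψ a := by
    intro a b ha hab
    have hb : 0 < b := lt_of_lt_of_le ha hab
    have key : (a * sInf (S b)) / b ≤ sInf (S a) := by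
      refine le_csInf (hne a) ?_
      rintro e ⟨s, hs, rfl⟩
      rw [div_le_iff₀ hb]
      have h1 : sInf (S b) ≤ ψ s * (1 + b / s) := csInf_le (hbdd b (le_of_lt hb)) (hmem b s hs)
      have h2 := hψnn s (le_of_lt hs)
      have e1 : a * (b / s) = b * (a / s) := by ring
      nlinarith
    rw [div_le_iff₀ hb] at key
    have : a * sInf (S b) ≤ b * sInf (S a) := by linarith [key]
    simp only [hΨdef]
    nlinarith
  -- concavity
  have hconc : ConcaveOn ℝ (Set.Ici 0) Ψ := by
    refine ⟨convex_Ici 0, ?_⟩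
    intro x hx y hy a b ha hb hab
    simp only [smul_eq_mul]
    have hx0 : (0:ℝ) ≤ x := hx
    have hy0 : (0:ℝ) ≤ y := hy
    have key : a * sInf (S x) + b * sInf (S y) ≤ sInf (S (a * x + b * y)) := by
      refine le_csInf (hne _) ?_
      rintro e ⟨s, hs, rfl⟩
      have hs' : s ≠ 0 := ne_of_gt hs
      have h1 : sInf (S x) ≤ ψ s * (1 + x / s) := csInf_le (hbdd x hx0) (hmem x s hs)
      have h2 : sInf (S y) ≤ ψ s * (1 + y / s) := csInf_le (hbdd y hy0) (hmem y s hs)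
      have heq : ψ s * (1 + (a * x + b * y) / s)
          = a * (ψ s * (1 + x / s)) + b * (ψ s * (1 + y / s)) := by
        field_simp
        linear_combination (-(ψ s * s)) * hab
      show a * sInf (S x) + b * sInf (S y) ≤ ψ s * (1 + (a * x + b * y) / s)
      rw [heq]
      have := mul_le_mul_of_nonneg_left h1 ha
      have := mul_le_mul_of_nonneg_left h2 hb
      linarith
    simp only [hΨdef]
    nlinarith [mul_le_mul_of_nonneg_left key (le_of_lt hK0)]
  -- continuity
  have hcont : ContinuousOn Ψ (Set.Ici 0) := by
    intro x hx
    have hx0 : (0:ℝ) ≤ x := hx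
    rcases eq_or_lt_of_le hx0 with hx0' | hx0'
    · -- x = 0
      subst hx0'  -- might need symm
      rw [Metric.continuousWithinAt_iff]
      intro ε hε
      have hlt : sInf (S 0) < sInf (S 0) + ε / (2 * K) := by
        have : 0 < ε / (2 * K) := by positivity
        linarith
      obtain ⟨e, he, hes⟩ := exists_lt_of_csInf_lt (hne 0) hlt
      obtain ⟨s, hs, rfl⟩ := he
      have hs0 : (0:ℝ) < s := hs
      have hψs : 0 < ψ s := hψpos s hs0
      have hes' : ψ s < sInf (S 0) + ε / (2 * K) := by
        have h0 : ψ s * (1 + 0 / s) < sInf (S 0) + ε / (2 * K) := hes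
        rw [zero_div, add_zero, mul_one] at h0
        exact h0
      refine ⟨s * ε / (2 * K * ψ s), by positivity, ?_⟩
      intro t ht hdist
      have ht0 : (0:ℝ) ≤ t := ht
      rw [Real.dist_eq, sub_zero, abs_of_nonneg ht0] at hdist
      have hlow : Ψ 0 ≤ Ψ t := hmono (Set.self_mem_Ici) ht ht0
      rw [Real.dist_eq, abs_of_nonneg (by linarith)]
      have h1 : sInf (S t) ≤ ψ s * (1 + t / s) := csInf_le (hbdd t ht0) (hmem t s hs0)
      have h3 : t * (2 * K * ψ s) < s * ε := by
        rw [lt_div_iff₀ (by positivity)] at hdist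
        linarith
      have h4 : t / s * (2 * K * ψ s) < ε := by
        rw [div_mul_eq_mul_div, div_lt_iff₀ hs0]
        nlinarith
      have hKe : K * (ε / (2 * K)) = ε / 2 := by
        field_simp
      have htdiv : 0 ≤ t / s := div_nonneg ht0 (le_of_lt hs0)
      simp only [hΨdef]
      nlinarith [mul_le_mul_of_nonneg_left h1 (le_of_lt hK0),
        mul_lt_mul_of_pos_left hes' hK0]
    · -- 0 < x
      rw [Metric.continuousWithinAt_iff]
      intro ε hε
      set M := Ψ (2 * x) with hM
      have hMnn : 0 ≤ M := hΨnn (2 * x) (by positivity)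
      set δ := min (x / 2) (ε * x / (2 * (M + 1))) with hδdef
      have hδ : 0 < δ := lt_min (by positivity) (by positivity)
      refine ⟨δ, hδ, ?_⟩
      intro t ht hdist
      have ht0 : (0:ℝ) ≤ t := ht
      rw [Real.dist_eq] at hdist
      obtain ⟨hd1, hd2⟩ := abs_lt.mp hdist
      have hδ1 : δ ≤ x / 2 := min_le_left _ _
      have hδ2 : δ ≤ ε * x / (2 * (M + 1)) := min_le_right _ _
      have hδ2' : δ * (2 * (M + 1)) ≤ ε * x := by
        rw [le_div_iff₀ (by positivity)] at hδ2
        linarith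
      have ht1 : x / 2 < t := by linarith
      have ht2 : t ≤ 2 * x := by linarith
      have hΨt : Ψ t ≤ M := hmono ht (by positivity : (0:ℝ) ≤ 2*x) ht2
      have hΨx : Ψ x ≤ M := hmono (le_of_lt hx0') (by positivity : (0:ℝ) ≤ 2*x) (by linarith)
      have hΨtnn : 0 ≤ Ψ t := hΨnn t ht0
      have hΨxnn : 0 ≤ Ψ x := hΨnn x hx0
      rw [Real.dist_eq, abs_lt]
      rcases le_total t x with htx | htx
      · have hBt := hBInf t x (by linarith) htx
        have hmtx : Ψ t ≤ Ψ x := hmono ht hx htx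
        constructor
        · -- -ε < Ψ t - Ψ x, i.e. Ψ x - Ψ t < ε
          nlinarith [mul_nonneg (by linarith : (0:ℝ) ≤ δ - (x - t)) hΨtnn,
            mul_nonneg (le_of_lt hδ) (by linarith : (0:ℝ) ≤ M - Ψ t),
            mul_pos hε (by linarith : (0:ℝ) < t - x / 2)]
        · linarith
      · have hBt := hBInf x t hx0' htx
        have hmtx : Ψ x ≤ Ψ t := hmono hx ht htx
        constructor
        · linarith
        · -- Ψ t - Ψ x < ε
          nlinarith [mul_nonneg (by linarith : (0:ℝ) ≤ δ - (t - x)) hΨxnn,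
            mul_nonneg (le_of_lt hδ) (by linarith : (0:ℝ) ≤ M - Ψ x),
            mul_pos hε (by linarith : (0:ℝ) < x - x / 2)]
  refine ⟨Ψ, hcont, hmono, hconc, ?_⟩
  intro t ht
  have ht0 : (0:ℝ) ≤ t := le_of_lt ht
  have hψt : 0 < ψ t := hψpos t ht
  constructor
  · -- 1 * ψ t ≤ Ψ t
    rw [one_mul]
    have key : ψ t / K ≤ sInf (S t) := by
      refine le_csInf (hne t) ?_
      rintro e ⟨s, hs, rfl⟩
      have hs0 : (0:ℝ) < s := hs
      have hψs : 0 < ψ s := hψpos s hs0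
      rw [div_le_iff₀ hK0]
      rcases le_total t s with hts | hst
      · have h6 := hinc t s ht0 hts
        have h7 : 0 ≤ t / s := div_nonneg ht0 (le_of_lt hs0)
        nlinarith
      · have h5 : s * ψ t ≤ K * t * ψ s := by
          have h6 := hinc' s t (le_of_lt hs0) hst
          rw [show K * (t / ψ t) = K * t / ψ t by ring, div_le_div_iff₀ hψs hψt] at h6
          linarith
        have hts : t / s * s = t := div_mul_cancel₀ t (ne_of_gt hs0)
        rw [← mul_le_mul_iff_of_pos_right hs0]
        nlinarith [mul_nonneg (mul_nonneg (le_of_lt hK0) (le_of_lt hψs)) (le_of_lt hs0)]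
    rw [div_le_iff₀ hK0] at key
    have hrfl : Ψ t = K * sInf (S t) := rfl
    linarith
  · -- Ψ t ≤ 2 * K ^ 2 * ψ t
    have h1 : sInf (S t) ≤ ψ t * (1 + t / t) := csInf_le (hbdd t ht0) (hmem t t ht)
    have h2 : t / t = 1 := div_self (ne_of_gt ht)
    rw [h2] at h1
    have hrfl : Ψ t = K * sInf (S t) := rfl
    rw [hrfl]
    nlinarith [mul_le_mul_of_nonneg_left h1 (le_of_lt hK0),
      mul_nonneg (mul_nonneg (le_of_lt hψt) (le_of_lt hK0)) (sub_nonneg.2 hK)]
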